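/- arXiv:1811.07614 — 4 statements merged into one kernel-verified Lean document; each statement's English description precedes it below -/
import Mathlib

section
/- For every integer n ≥ 2, there are at least n! + 1 distinct submonoids of cardinality n! of the monoid of all functions Z_n → Z_n under composition. Specifically, the n! sets {σ∘h∘σ⁻¹ : h ∈ M_n}, one for each permutation σ of Z_n, are pairwise distinct submonoids each of cardinality n!, and the symmetric group S_n is a further submonoid of cardinality n! distinct from all of them. -/
/-- A subset of `Z_n → Z_n` which contains the identity and is closed under
composition, i.e. a submonoid of the composition monoid `Z_n^{Z_n}`. -/
def IsSubmonoidSet {n : ℕ} (S : Set (Fin n → Fin n)) : Prop :=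
  (id ∈ S) ∧ ∀ f ∈ S, ∀ g ∈ S, f ∘ g ∈ S

/-- The `σ`-conjugate `{σ∘h∘σ⁻¹ : h ∈ M_n}` of `M_n = {h | ∀ i, h i ≤ i}`. -/
def conjM (n : ℕ) (σ : Equiv.Perm (Fin n)) : Set (Fin n → Fin n) :=
  (fun h => ⇑σ ∘ h ∘ ⇑σ.symm) '' {h : Fin n → Fin n | ∀ i : Fin n, h i ≤ i}

lemma mem_conjM_iff {n : ℕ} (σ : Equiv.Perm (Fin n)) (f : Fin n → Fin n) :
    f ∈ conjM n σ ↔ ∀ j, σ.symm (f j) ≤ σ.symm j := by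
  constructor
  · rintro ⟨h, hh, rfl⟩ j
    simpa using hh (σ.symm j)
  · intro hf
    refine ⟨⇑σ.symm ∘ f ∘ ⇑σ, fun i => by simpa using hf (σ i), ?_⟩
    funext i; simp

lemma card_M (n : ℕ) :
    Nat.card {h : Fin n → Fin n | ∀ i : Fin n, h i ≤ i} = Nat.factorial n := by
  have e : {h : Fin n → Fin n // ∀ i : Fin n, h i ≤ i} ≃ ∀ i : Fin n, {j : Fin n // j ≤ i} :=
    Equiv.subtypePiEquivPi (p := fun (i : Fin n) (j : Fin n) => j ≤ i)
  have : Nat.card {h : Fin n → Fin n | ∀ i : Fin n, h i ≤ i}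
      = Nat.card (∀ i : Fin n, {j : Fin n // j ≤ i}) := Nat.card_congr e
  rw [this, Nat.card_pi]
  have h1 : ∀ i : Fin n, Nat.card {j : Fin n // j ≤ i} = (i : ℕ) + 1 := by
    intro i
    have : Nat.card {j : Fin n // j ≤ i} = Fintype.card (Set.Iic i) := by
      rw [Nat.card_eq_fintype_card]
      exact Fintype.card_congr (Equiv.refl _)
    rw [this, ← Set.toFinset_card, Set.toFinset_Iic, Fin.card_Iic]
  calc (∏ i : Fin n, Nat.card {j : Fin n // j ≤ i})
      = ∏ i : Fin n, ((i : ℕ) + 1) := by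
        exact Finset.prod_congr rfl fun i _ => h1 i
    _ = ∏ i ∈ Finset.range n, (i + 1) := Fin.prod_univ_eq_prod_range _ n
    _ = Nat.factorial n := Finset.prod_range_add_one_eq_factorial n

/-- Proposition 3, part 1 (Submonoid sizes): the `n!` pairwise distinct conjugates
of `M_n` are submonoids of cardinality `n!`, and `S_n` is a further submonoid of
cardinality `n!` distinct from all of them — so at least `n! + 1` distinct
submonoids of cardinality `n!`. -/
theorem submonoid_sizes_part1 (n : ℕ) (hn : 2 ≤ n) :
    (∀ σ : Equiv.Perm (Fin n),
        IsSubmonoidSet (conjM n σ) ∧ Nat.card (conjM n σ) = Nat.factorial n) ∧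
      Function.Injective (conjM n) ∧
      IsSubmonoidSet {f : Fin n → Fin n | Function.Bijective f} ∧
      Nat.card {f : Fin n → Fin n | Function.Bijective f} = Nat.factorial n ∧
      ∀ σ : Equiv.Perm (Fin n),
        {f : Fin n → Fin n | Function.Bijective f} ≠ conjM n σ := by
  haveI : NeZero n := ⟨by omega⟩
  refine ⟨fun σ => ⟨⟨?_, ?_⟩, ?_⟩, ?_, ⟨Function.bijective_id, fun f hf g hg => hf.comp hg⟩,
    ?_, ?_⟩
  · rw [mem_conjM_iff]; intro j; simp
  · intro f hf g hg
    rw [mem_conjM_iff] at *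
    intro j
    exact le_trans (hf (g j)) (hg j)
  · -- cardinality of conjM
    have hinj : Function.Injective (fun h : Fin n → Fin n => ⇑σ ∘ h ∘ ⇑σ.symm) := by
      intro a b hab
      funext i
      have := congrFun hab (σ i)
      simpa using this
    rw [conjM, Nat.card_image_of_injective hinj, card_M]
  · -- injectivity of conjM
    intro σ τ hst
    have key : ∀ x y : Fin n, x ≤ y → τ.symm (σ x) ≤ τ.symm (σ y) := by
      intro x y hxy
      set f : Fin n → Fin n := fun j => if j = σ y then σ x else j with hf
      have hfs : f ∈ conjM n σ := by
        rw [mem_conjM_iff]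
        intro j
        by_cases h : j = σ y <;> simp [hf, h, hxy]
      rw [hst, mem_conjM_iff] at hfs
      simpa [hf] using hfs (σ y)
    have hmono : Monotone (⇑τ.symm ∘ ⇑σ) := fun x y h => key x y h
    have hsm : StrictMono (⇑τ.symm ∘ ⇑σ) :=
      hmono.strictMono_of_injective (τ.symm.injective.comp σ.injective)
    have he' : StrictMono.orderIsoOfSurjective _ hsm
        (τ.symm.surjective.comp σ.surjective) = OrderIso.refl (Fin n) :=
      Subsingleton.elim _ _
    have h1 : (⇑τ.symm ∘ ⇑σ) = fun x => x := by
      rw [← StrictMono.coe_orderIsoOfSurjective _ hsm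
        (τ.symm.surjective.comp σ.surjective), he']
      rfl
    refine Equiv.ext fun x => ?_
    have : τ.symm (σ x) = x := congrFun h1 x
    
    calc σ x = τ (τ.symm (σ x)) := (τ.apply_symm_apply _).symm
      _ = τ x := by rw [this]
  · -- card of bijections
    have e : {f : Fin n → Fin n // Function.Bijective f} ≃ Equiv.Perm (Fin n) :=
      { toFun := fun f => Equiv.ofBijective f f.2
        invFun := fun e => ⟨e, e.bijective⟩
        left_inv := fun f => rfl
        right_inv := fun e => Equiv.ext fun x => rfl }
    have hc : Nat.card {f : Fin n → Fin n | Function.Bijective f}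
        = Nat.card (Equiv.Perm (Fin n)) := Nat.card_congr e
    rw [hc, Nat.card_eq_fintype_card, Fintype.card_perm, Fintype.card_fin]
  · -- S_n ≠ conjM σ
    intro σ h
    have hc : (fun _ : Fin n => σ 0) ∈ conjM n σ := by
      rw [mem_conjM_iff]
      intro j
      simp
    rw [← h] at hc
    have h0 : (0 : Fin n) = 1 := hc.1 (by simp)
    have h01 : (0 : ℕ) = 1 % n := by simpa [Fin.ext_iff, Fin.val_one'] using h0
    rw [Nat.mod_eq_of_lt (by omega)] at h01
    omega
end

section
/- For every integer n ≥ 2, the map sending a permutation σ of Z_n to the set {σ∘h∘σ⁻¹ : h ∈ M_n} of σ-conjugates of M_n is injective: if σ_0 ≠ σ_1 are permutations of Z_n, then {σ_0∘h∘σ_0⁻¹ : h ∈ M_n} ≠ {σ_1∘h∘σ_1⁻¹ : h ∈ M_n}. -/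
/-- The distinctness claim in Proposition 3, part 1: the map `σ ↦ σ M_n σ⁻¹`
is injective on `S_n`. -/
theorem conjugates_of_M_distinct (n : ℕ) (hn : 2 ≤ n) :
    Function.Injective (conjM n) := by
  intro σ τ h
  have hmem : ∀ g, g ∈ conjM n τ ↔ ∀ j, τ.symm (g j) ≤ τ.symm j := by
    intro g
    constructor
    · rintro ⟨f, hf, rfl⟩ j
      simpa using hf (τ.symm j)
    · intro hg
      exact ⟨⇑τ.symm ∘ g ∘ ⇑τ, fun i => by simpa using hg (τ i), by ext j; simp⟩
  have key : ∀ m : ℕ, ∀ k : Fin n, k.val = m → σ k = τ k := by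
    intro m
    induction m using Nat.strong_induction_on with
    | _ m IH' =>
      rintro k rfl
      have IH : ∀ j : Fin n, j < k → σ j = τ j := fun j hj => IH' j.val hj j rfl
      have hge1 : k ≤ σ.symm (τ k) := by
        by_contra hlt
        push_neg at hlt
        have h1 := IH _ hlt
        rw [Equiv.apply_symm_apply] at h1
        have := τ.injective h1.symm
        exact absurd this.symm (ne_of_gt hlt)
      have hge2 : k ≤ τ.symm (σ k) := by
        by_contra hlt
        push_neg at hlt
        have h1 := IH _ hlt
        rw [Equiv.apply_symm_apply] at h1
        have := σ.injective h1
        exact absurd this.symm (ne_of_gt hlt)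
      have hg : (⇑σ ∘ (fun i => min i k) ∘ ⇑σ.symm) ∈ conjM n σ :=
        ⟨_, fun i => min_le_left _ _, rfl⟩
      rw [h, hmem] at hg
      have h2 := hg (τ k)
      simp only [Function.comp_apply, Equiv.symm_apply_apply] at h2
      rw [min_eq_right hge1] at h2
      have h3 : τ.symm (σ k) = k := le_antisymm h2 hge2
      have := congrArg τ h3
      rwa [Equiv.apply_symm_apply] at this
  exact Equiv.ext fun k => key k.val k rfl
end

section
/- For every integer n ≥ 1, the cardinality of the set S_n ∪ (⋃_{σ ∈ S_n} {σ∘h∘σ⁻¹ : h ∈ M_n}), as a set of functions from Z_n to Z_n, equals (n+1)^(n−1) + n! − 1. -/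
open Function Finset

namespace CayleyCount

variable {n : ℕ}

/-- every periodic point is fixed -/
def Acyc (g : Fin n → Fin n) : Prop := ∀ x k, g^[k+1] x = x → g x = x

lemma Acyc.iterate_fixed' {g : Fin n → Fin n} (hg : Acyc g) {x : Fin n} {k : ℕ}
    (hk : 1 ≤ k) (h : g^[k] x = x) : g x = x := by
  obtain ⟨k, rfl⟩ := Nat.exists_eq_add_of_le hk
  exact hg x k (by simpa [Nat.add_comm] using h)

lemma acyc_id : Acyc (id : Fin n → Fin n) := by intro x k _; rfl

/-- removing edges preserves acyclicity -/
lemma Acyc.sub {g g' : Fin n → Fin n} (hg : Acyc g)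
    (h : ∀ x, g' x = g x ∨ g' x = x) : Acyc g' := by
  intro x k hk
  by_cases hx : g' x = x
  · exact hx
  by_cases hA : ∃ j ≤ k, g' (g'^[j] x) = g'^[j] x
  · obtain ⟨j, hj, hfix⟩ := hA
    have hxz : x = g'^[j] x := by
      have : g'^[(k + 1 - j) + j] x = g'^[k+1] x := by
        rw [Nat.sub_add_cancel (le_trans hj (Nat.le_succ k))]
      calc x = g'^[k+1] x := hk.symm
        _ = g'^[k+1-j] (g'^[j] x) := by rw [← this, Function.iterate_add_apply]
        _ = g'^[j] x := Function.iterate_fixed hfix _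
    calc g' x = g' (g'^[j] x) := by rw [← hxz]
      _ = g'^[j] x := hfix
      _ = x := hxz.symm
  · push_neg at hA
    have key : ∀ j ≤ k + 1, g'^[j] x = g^[j] x := by
      intro j hj
      induction j with
      | zero => rfl
      | succ i ih =>
        have hi : i ≤ k := Nat.lt_succ_iff.mp hj
        have hne := hA i hi
        have : g' (g'^[i] x) = g (g'^[i] x) := (h _).resolve_right hne
        rw [Function.iterate_succ_apply', this, ih (le_trans hi (Nat.le_succ k))]
        exact (Function.iterate_succ_apply' g i x).symm
    have : g^[k+1] x = x := by rw [← key (k+1) le_rfl]; exact hk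
    have hgx := hg x k this
    exact absurd ((h x).resolve_left (by rw [hgx]; exact fun hh => hx hh)) hx

/-- the eventual fixed point of the iteration -/
def root (g : Fin n → Fin n) (x : Fin n) : Fin n := g^[n] x

lemma Acyc.root_fixed (hn : 1 ≤ n) {g : Fin n → Fin n} (hg : Acyc g) (x : Fin n) :
    g (root g x) = root g x := by
  have : ¬ Function.Injective (fun i : Fin (n+1) => g^[(i : ℕ)] x) := by
    intro hinj
    have := Fintype.card_le_of_injective _ hinj
    simp at this
  rw [Function.not_injective_iff] at this
  obtain ⟨i, j, hij, hne⟩ := this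
  wlog hlt : (i : ℕ) < (j : ℕ) generalizing i j
  · exact this j i hij.symm (Ne.symm hne) (by omega)
  set y := g^[(i:ℕ)] x with hy
  have hper : g^[(j:ℕ) - (i:ℕ)] y = y := by
    have : g^[((j:ℕ) - (i:ℕ)) + (i:ℕ)] x = g^[(j:ℕ)] x := by
      rw [Nat.sub_add_cancel hlt.le]
    rw [hy, ← Function.iterate_add_apply, this, ← hij]
  have hfix : g y = y := hg.iterate_fixed' (by omega) hper
  have hroot : root g x = y := by
    have hin : (i:ℕ) ≤ n := by omega
    have : g^[n] x = g^[n - (i:ℕ)] y := by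
      rw [hy, ← Function.iterate_add_apply]
      congr 1
      omega
    rw [root, this]
    exact Function.iterate_fixed hfix _
  rw [hroot]; exact hfix

lemma root_eq_of_fixed {g : Fin n → Fin n} {x : Fin n} (h : g x = x) : root g x = x :=
  Function.iterate_fixed h _

/-- if some iterate of `y` is a fixed point `z`, then `root y = z` -/
lemma Acyc.root_eq_of_iterate (hn : 1 ≤ n) {g : Fin n → Fin n} (hg : Acyc g)
    {y z : Fin n} {j : ℕ} (hj : g^[j] y = z) (hz : g z = z) : root g y = z := by
  rcases le_or_gt j n with hle | hlt
  · have : g^[(n - j) + j] y = g^[n] y := by rw [Nat.sub_add_cancel hle]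
    rw [root, ← this, Function.iterate_add_apply, hj]
    exact Function.iterate_fixed hz _
  · have : g^[(j - n) + n] y = g^[j] y := by rw [Nat.sub_add_cancel hlt.le]
    have h2 : g^[j - n] (root g y) = z := by
      rw [root, ← Function.iterate_add_apply, this, hj]
    rw [← h2, Function.iterate_fixed (hg.root_fixed hn y) _]

lemma Acyc.root_mem_fixed (hn : 1 ≤ n) {g : Fin n → Fin n} (hg : Acyc g) (x : Fin n) :
    g (root g x) = root g x := hg.root_fixed hn x

/-- orbits of two functions agreeing off `a` coincide until hitting `a` -/
lemma iterate_agree {g' b : Fin n → Fin n} {a : Fin n}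
    (h : ∀ z, z ≠ a → g' z = b z) {x : Fin n} {m : ℕ}
    (hm : ∀ i < m, b^[i] x ≠ a) : ∀ i ≤ m, g'^[i] x = b^[i] x := by
  intro i hi
  induction i with
  | zero => rfl
  | succ i ih =>
    rw [Function.iterate_succ_apply', Function.iterate_succ_apply',
      ih (le_trans (Nat.le_succ i) hi)]
    exact h _ (hm i (by omega))

def build (es : List (Fin n × Fin n)) (x : Fin n) : Fin n :=
  match es.find? (fun e => decide (e.1 = x)) with
  | some e => e.2
  | none => x

lemma build_of_not_mem {es : List (Fin n × Fin n)} {x : Fin n}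
    (h : x ∉ es.map Prod.fst) : build es x = x := by
  have : es.find? (fun e => decide (e.1 = x)) = none := by
    rw [List.find?_eq_none]
    intro e he
    simp only [decide_eq_true_eq]
    intro hex
    exact h (List.mem_map.mpr ⟨e, he, hex⟩)
  rw [build, this]

lemma build_of_mem {es : List (Fin n × Fin n)} {x y : Fin n}
    (hnd : (es.map Prod.fst).Nodup) (h : (x, y) ∈ es) : build es x = y := by
  have hsome : (es.find? (fun e => decide (e.1 = x))).isSome := by
    rw [List.find?_isSome]
    exact ⟨(x,y), h, by simp⟩
  obtain ⟨e, he⟩ := Option.isSome_iff_exists.mp hsome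
  have hmem := List.mem_of_find?_eq_some he
  have hex : e.1 = x := by simpa using List.find?_some he
  have : e = (x, y) := by
    have := List.inj_on_of_nodup_map hnd hmem h (by simpa using hex)
    exact this
  rw [build, he, this]

lemma mem_map_fst {es : List (Fin n × Fin n)} {x : Fin n} (h : x ∈ es.map Prod.fst) :
    ∃ y, (x, y) ∈ es := by
  obtain ⟨e, he, hex⟩ := List.mem_map.mp h
  exact ⟨e.2, by rwa [show (x, e.2) = e by rw [← hex]]⟩

lemma build_append_left {es t : List (Fin n × Fin n)} {x : Fin n}
    (h : x ∈ es.map Prod.fst) : build (es ++ t) x = build es x := by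
  obtain ⟨e, he, hex⟩ := List.mem_map.mp h
  have hsome : ∃ e', es.find? (fun e => decide (e.1 = x)) = some e' := by
    rw [← Option.isSome_iff_exists, List.find?_isSome]
    exact ⟨e, he, by simp [hex]⟩
  obtain ⟨e', he'⟩ := hsome
  have : (es ++ t).find? (fun e => decide (e.1 = x)) = some e' := by
    rw [List.find?_append, he']; rfl
  rw [build, build, this, he']

lemma build_append_right {es t : List (Fin n × Fin n)} {x : Fin n}
    (h : x ∉ es.map Prod.fst) : build (es ++ t) x = build t x := by
  have hnone : es.find? (fun e => decide (e.1 = x)) = none := by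
    rw [List.find?_eq_none]
    intro e he
    simp only [decide_eq_true_eq]
    exact fun hex => h (List.mem_map.mpr ⟨e, he, hex⟩)
  rw [build, build, List.find?_append, hnone]
  rfl

def Good (es : List (Fin n × Fin n)) : Prop :=
  (es.map Prod.fst).Nodup ∧ (∀ e ∈ es, e.1 ≠ e.2) ∧ Acyc (build es)

def deg (g : Fin n → Fin n) : ℕ := (univ.filter (fun x => g x ≠ x)).card

lemma good_nil : Good ([] : List (Fin n × Fin n)) := by
  refine ⟨List.nodup_nil, by simp, ?_⟩
  have : build ([] : List (Fin n × Fin n)) = id := by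
    funext x; exact build_of_not_mem (by simp)
  rw [this]; exact acyc_id

/-- a prefix of a good list is good -/
lemma Good.append_left {es t : List (Fin n × Fin n)} (h : Good (es ++ t)) : Good es := by
  obtain ⟨hnd, hne, hac⟩ := h
  rw [List.map_append] at hnd
  refine ⟨hnd.of_append_left, fun e he => hne e (List.mem_append_left _ he), ?_⟩
  refine hac.sub fun x => ?_
  by_cases hx : x ∈ es.map Prod.fst
  · exact Or.inl (build_append_left hx).symm
  · exact Or.inr (build_of_not_mem hx)

lemma build_ne_self {es : List (Fin n × Fin n)} (hnd : (es.map Prod.fst).Nodup)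
    (hne : ∀ e ∈ es, e.1 ≠ e.2) {x : Fin n} (hx : x ∈ es.map Prod.fst) :
    build es x ≠ x := by
  obtain ⟨y, hy⟩ := mem_map_fst hx
  rw [build_of_mem hnd hy]
  exact fun h => hne _ hy (by rw [h])

lemma deg_build {es : List (Fin n × Fin n)} (h : Good es) :
    deg (build es) = es.length := by
  obtain ⟨hnd, hne, _⟩ := h
  have hset : univ.filter (fun x => build es x ≠ x) = (es.map Prod.fst).toFinset := by
    ext x
    simp only [mem_filter, mem_univ, true_and, List.mem_toFinset]
    constructor
    · intro hx
      by_contra hmem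
      exact hx (build_of_not_mem hmem)
    · exact build_ne_self hnd hne
  rw [deg, hset, List.toFinset_card_of_nodup hnd, List.length_map]

/-- acyclic functions have a fixed point, so `deg g < n` -/
lemma Acyc.deg_lt (hn : 1 ≤ n) {g : Fin n → Fin n} (hg : Acyc g) : deg g < n := by
  have x0 : Fin n := ⟨0, hn⟩
  have hfix : g (root g x0) = root g x0 := hg.root_fixed hn x0
  have hsub : univ.filter (fun x => g x ≠ x) ⊆ univ.erase (root g x0) := by
    intro x hx
    rw [mem_filter] at hx
    rw [mem_erase]
    exact ⟨fun h => hx.2 (h ▸ hfix), mem_univ x⟩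
  calc deg g ≤ (univ.erase (root g x0)).card := card_le_card hsub
    _ = n - 1 := by rw [card_erase_of_mem (mem_univ _), card_univ, Fintype.card_fin]
    _ < n := by omega

def legal (g : Fin n → Fin n) : Finset (Fin n × Fin n) :=
  univ.filter (fun e => g e.1 = e.1 ∧ root g e.2 ≠ e.1)

lemma good_append_iff (hn : 1 ≤ n) {es : List (Fin n × Fin n)} {e : Fin n × Fin n} :
    Good (es ++ [e]) ↔ Good es ∧ e ∈ legal (build es) := by
  constructor
  · rintro h
    obtain ⟨hnd, hne, hac⟩ := h
    have hES : Good es := Good.append_left (t := [e]) ⟨hnd, hne, hac⟩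
    have hnd' : (es.map Prod.fst).Nodup := hES.1
    have hfresh : e.1 ∉ es.map Prod.fst := by
      rw [List.map_append] at hnd
      have := List.disjoint_of_nodup_append hnd
      simpa using fun hmem => this hmem (by simp)
    have hb1 : build es e.1 = e.1 := build_of_not_mem hfresh
    -- agreement off e.1
    have hagree : ∀ z, z ≠ e.1 → build (es ++ [e]) z = build es z := by
      intro z hz
      by_cases hzs : z ∈ es.map Prod.fst
      · exact build_append_left hzs
      · rw [build_append_right hzs, build_of_not_mem hzs]
        exact build_of_not_mem (by simp [hz])
    have hb1' : build (es ++ [e]) e.1 = e.2 := by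
      rw [build_append_right hfresh]
      exact build_of_mem (by simp) (by simp)
    have he12 : e.1 ≠ e.2 := hne e (by simp)
    refine ⟨hES, ?_⟩
    rw [legal, mem_filter]
    refine ⟨mem_univ _, hb1, ?_⟩
    -- suppose root (build es) e.2 = e.1; derive a cycle in build (es ++ [e])
    intro hroot
    set b := build es
    set g' := build (es ++ [e])
    -- find j with b^[j] e.2 = e.1 : j = n works
    have hbj : b^[n] e.2 = e.1 := hroot
    -- minimal j
    have hex : ∃ j, b^[j] e.2 = e.1 := ⟨n, hbj⟩
    classical
    let j := Nat.find hex
    have hj : b^[j] e.2 = e.1 := Nat.find_spec hex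
    have hjmin : ∀ i < j, b^[i] e.2 ≠ e.1 := fun i hi => Nat.find_min hex hi
    -- g' matches b on this orbit
    have horbit : g'^[j] e.2 = b^[j] e.2 :=
      iterate_agree hagree hjmin j le_rfl
    have hcyc : g'^[j+1] e.1 = e.1 := by
      rw [Function.iterate_succ_apply, hb1', horbit, hj]
    have := hac e.1 j hcyc
    rw [hb1'] at this
    exact he12 this.symm
  · rintro ⟨hES, hleg⟩
    obtain ⟨hnd, hne, hac⟩ := hES
    rw [legal, mem_filter] at hleg
    obtain ⟨-, hb1, hroot⟩ := hleg
    have hfresh : e.1 ∉ es.map Prod.fst := fun hmem =>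
      build_ne_self hnd hne hmem hb1
    have he12 : e.1 ≠ e.2 := by
      intro h12
      apply hroot
      rw [← h12]
      exact root_eq_of_fixed hb1
    have hagree : ∀ z, z ≠ e.1 → build (es ++ [e]) z = build es z := by
      intro z hz
      by_cases hzs : z ∈ es.map Prod.fst
      · exact build_append_left hzs
      · rw [build_append_right hzs, build_of_not_mem hzs]
        exact build_of_not_mem (by simp [hz])
    have hnd' : ((es ++ [e]).map Prod.fst).Nodup := by
      rw [List.map_append]
      simp only [List.map_cons, List.map_nil]
      rw [List.nodup_append]
      exact ⟨hnd, List.nodup_singleton _, fun a ha b hb hab => hfresh (by rw [← List.mem_singleton.mp hb, ← hab]; exact ha)⟩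
    have hb1' : build (es ++ [e]) e.1 = e.2 := by
      rw [build_append_right hfresh]
      exact build_of_mem (by simp) (by simp)
    refine ⟨hnd', ?_, ?_⟩
    · intro f hf
      rcases List.mem_append.mp hf with hf | hf
      · exact hne f hf
      · simp only [List.mem_singleton] at hf
        rw [hf]; exact he12
    · set b := build es
      set g' := build (es ++ [e])
      intro x k hk
      by_cases hhit : ∃ i ≤ k, g'^[i] x = e.1
      · exfalso
        obtain ⟨i, hi, hix⟩ := hhit
        have hcyc1 : g'^[k+1] e.1 = e.1 := by
          calc g'^[k+1] e.1 = g'^[k+1] (g'^[i] x) := by rw [hix]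
            _ = g'^[(k+1) + i] x := (Function.iterate_add_apply g' (k+1) i x).symm
            _ = g'^[i + (k+1)] x := by rw [Nat.add_comm]
            _ = g'^[i] (g'^[k+1] x) := Function.iterate_add_apply g' i (k+1) x
            _ = g'^[i] x := by rw [hk]
            _ = e.1 := hix
        have hk2 : g'^[k] e.2 = e.1 := by
          have : g'^[k] (g' e.1) = e.1 := by
            rw [← Function.iterate_succ_apply]; exact hcyc1
          rwa [hb1'] at this
        have hex2 : ∃ j, g'^[j] e.2 = e.1 := ⟨k, hk2⟩
        classical
        have hj : g'^[Nat.find hex2] e.2 = e.1 := Nat.find_spec hex2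
        have hjmin : ∀ i < Nat.find hex2, g'^[i] e.2 ≠ e.1 :=
          fun i hi => Nat.find_min hex2 hi
        have horbit : b^[Nat.find hex2] e.2 = g'^[Nat.find hex2] e.2 :=
          iterate_agree (fun z hz => (hagree z hz).symm) hjmin _ le_rfl
        have : b^[Nat.find hex2] e.2 = e.1 := by rw [horbit, hj]
        exact hroot (hac.root_eq_of_iterate hn this hb1)
      · push_neg at hhit
        have hmatch : b^[k+1] x = g'^[k+1] x :=
          iterate_agree (fun z hz => (hagree z hz).symm)
            (fun i hi => hhit i (by omega)) _ le_rfl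
        have hbx : b x = x := hac x k (by rw [hmatch]; exact hk)
        rw [hagree x (hhit 0 (Nat.zero_le k)), hbx]

lemma seqs_finite (n d : ℕ) : {l : List (Fin n × Fin n) | l.length = d ∧ Good l}.Finite :=
  (List.finite_length_eq _ d).subset fun _ hl => hl.1

noncomputable def seqs (n d : ℕ) : Finset (List (Fin n × Fin n)) :=
  (seqs_finite n d).toFinset

lemma mem_seqs {d : ℕ} {l : List (Fin n × Fin n)} :
    l ∈ seqs n d ↔ l.length = d ∧ Good l := by
  rw [seqs, Set.Finite.mem_toFinset]; rfl

/-- counting legal new edges -/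
lemma card_legal (hn : 1 ≤ n) {g : Fin n → Fin n} (hg : Acyc g) :
    (legal g).card = n * (n - deg g - 1) := by
  classical
  set R : Finset (Fin n) := univ.filter (fun x => g x = x) with hR
  have hRcard : R.card + deg g = n := by
    have h := card_filter_add_card_filter_not (s := (univ : Finset (Fin n)))
      (p := fun x => g x = x)
    simp only [card_univ, Fintype.card_fin] at h
    have hdeg : (univ.filter (fun x => ¬ g x = x)).card = deg g := by
      rw [deg]
    rw [← hdeg]
    convert h using 2
  have hdeglt : deg g < n := hg.deg_lt hn
  have hr1 : 1 ≤ R.card := by omega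
  have hmaps : ∀ x : Fin n, root g x ∈ R := by
    intro x
    rw [hR, mem_filter]
    exact ⟨mem_univ _, hg.root_fixed hn x⟩
  have hfibers : ∑ x ∈ R, (univ.filter (fun y => root g y = x)).card = n := by
    have h := Finset.card_eq_sum_card_fiberwise (f := root g)
      (s := (univ : Finset (Fin n))) (t := R) (fun x _ => hmaps x)
    simp only [card_univ, Fintype.card_fin] at h
    exact h.symm
  have hstep : ∀ x ∈ R, ((legal g).filter (fun e => e.1 = x)).card
      = n - (univ.filter (fun y => root g y = x)).card := by
    intro x hx
    have hx' : g x = x := (mem_filter.mp hx).2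
    have himage : (legal g).filter (fun e => e.1 = x)
        = (univ.filter (fun y => root g y ≠ x)).image (fun y => (x, y)) := by
      ext e
      simp only [legal, mem_filter, mem_univ, true_and, mem_image, filter_filter]
      constructor
      · rintro ⟨⟨h1, h2⟩, h3⟩
        exact ⟨e.2, by rw [h3] at h2; exact h2, by rw [← h3]⟩
      · rintro ⟨y, hy, rfl⟩
        exact ⟨⟨hx', hy⟩, rfl⟩
    have hinj : Function.Injective (fun y : Fin n => (x, y)) := by
      intro a b hab
      simpa using hab
    rw [himage, Finset.card_image_of_injective _ hinj]
    have h2 := card_filter_add_card_filter_not (s := (univ : Finset (Fin n)))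
      (p := fun y => root g y = x)
    simp only [card_univ, Fintype.card_fin] at h2
    have : (univ.filter (fun y => ¬ root g y = x)).card
        = (univ.filter (fun y => root g y ≠ x)).card := by congr 1
    omega
  have hmain : (legal g).card = ∑ x ∈ R, ((legal g).filter (fun e => e.1 = x)).card := by
    apply Finset.card_eq_sum_card_fiberwise (f := Prod.fst)
    intro e he
    rw [legal, mem_coe, mem_filter] at he
    rw [hR, mem_coe, mem_filter]
    exact ⟨mem_univ _, he.2.1⟩
  rw [hmain, Finset.sum_congr rfl hstep]
  rw [Finset.sum_tsub_distrib]
  · rw [Finset.sum_const, smul_eq_mul, hfibers]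
    have : R.card * n - n = (R.card - 1) * n := by
      rw [Nat.sub_one_mul]
    rw [this]
    have : R.card - 1 = n - deg g - 1 := by omega
    rw [this, Nat.mul_comm]
  · intro x _
    exact card_le_card (filter_subset _ _) |>.trans (by simp)

lemma card_seqs (hn : 1 ≤ n) (d : ℕ) :
    (seqs n d).card = n ^ d * (n - 1).descFactorial d := by
  classical
  induction d with
  | zero =>
    have : seqs n 0 = {[]} := by
      ext l
      rw [mem_seqs, mem_singleton, List.length_eq_zero_iff]
      constructor
      · rintro ⟨rfl, -⟩; rfl
      · rintro rfl; exact ⟨rfl, good_nil⟩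
    rw [this]; simp
  | succ d ih =>
    have hsplit : seqs n (d+1)
        = (seqs n d).biUnion (fun es => (legal (build es)).image (fun e => es ++ [e])) := by
      ext l
      simp only [mem_biUnion, mem_image, mem_seqs]
      constructor
      · rintro ⟨hlen, hgood⟩
        rcases List.eq_nil_or_concat l with rfl | ⟨es, e, rfl⟩
        · simp at hlen
        rw [List.concat_eq_append] at hgood hlen ⊢
        rw [good_append_iff hn] at hgood
        obtain ⟨hg, hleg⟩ := hgood
        simp only [List.length_append, List.length_singleton] at hlen
        exact ⟨es, ⟨by omega, hg⟩, e, hleg, rfl⟩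
      · rintro ⟨es, ⟨hlen, hg⟩, e, hleg, rfl⟩
        exact ⟨by simp [hlen], (good_append_iff hn).mpr ⟨hg, hleg⟩⟩
    rw [hsplit, Finset.card_biUnion]
    · have hconst : ∀ es ∈ seqs n d,
          ((legal (build es)).image (fun e => es ++ [e])).card = n * (n - d - 1) := by
        intro es hes
        obtain ⟨hlen, hgood⟩ := mem_seqs.mp hes
        have hinj : Function.Injective (fun e : Fin n × Fin n => es ++ [e]) := by
          intro a b hab
          simpa using hab
        rw [Finset.card_image_of_injective _ hinj, card_legal hn hgood.2.2,
          deg_build hgood, hlen]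
      rw [Finset.sum_congr rfl hconst, Finset.sum_const, smul_eq_mul, ih]
      have h1 : n - d - 1 = n - 1 - d := by omega
      rw [h1, pow_succ, Nat.descFactorial_succ]
      ring
    · intro es₁ h₁ es₂ h₂ hne
      rw [Function.onFun, Finset.disjoint_left]
      intro l hl₁ hl₂
      simp only [mem_image] at hl₁ hl₂
      obtain ⟨e₁, -, rfl⟩ := hl₁
      obtain ⟨e₂, -, heq⟩ := hl₂
      exact hne (List.append_inj' heq.symm rfl).1

noncomputable def edgeList (g : Fin n → Fin n) : List (Fin n × Fin n) :=
  ((univ.filter (fun x => g x ≠ x)).toList).map (fun x => (x, g x))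

lemma edgeList_nodup_fst (g : Fin n → Fin n) : ((edgeList g).map Prod.fst).Nodup := by
  rw [edgeList, List.map_map]
  have : (Prod.fst ∘ fun x : Fin n => (x, g x)) = id := rfl
  rw [this, List.map_id]
  exact Finset.nodup_toList _

lemma edgeList_length (g : Fin n → Fin n) : (edgeList g).length = deg g := by
  rw [edgeList, List.length_map, Finset.length_toList, deg]

lemma mem_edgeList {g : Fin n → Fin n} {e : Fin n × Fin n} :
    e ∈ edgeList g ↔ g e.1 ≠ e.1 ∧ e.2 = g e.1 := by
  rw [edgeList, List.mem_map]
  constructor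
  · rintro ⟨x, hx, rfl⟩
    rw [Finset.mem_toList, mem_filter] at hx
    exact ⟨hx.2, rfl⟩
  · rintro ⟨h1, h2⟩
    refine ⟨e.1, ?_, ?_⟩
    · rw [Finset.mem_toList, mem_filter]; exact ⟨mem_univ _, h1⟩
    · rw [← h2]

lemma fiber_eq_permutations {g : Fin n → Fin n} (hg : Acyc g) :
    (seqs n (deg g)).filter (fun es => build es = g)
      = (edgeList g).permutations.toFinset := by
  classical
  ext es
  rw [mem_filter, mem_seqs, List.mem_toFinset, List.mem_permutations]
  constructor
  · rintro ⟨⟨hlen, hnd, hne, -⟩, hbuild⟩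
    have hsub : es ⊆ edgeList g := by
      intro e he
      rw [mem_edgeList]
      have h2 : g e.1 = e.2 := by rw [← hbuild]; exact build_of_mem hnd he
      refine ⟨?_, h2.symm⟩
      rw [h2]
      exact fun h => hne e he h.symm
    have hesnd : es.Nodup := hnd.of_map _
    have hsp : List.Subperm es (edgeList g) := hesnd.subperm hsub
    exact hsp.perm_of_length_le (by rw [edgeList_length, hlen])
  · intro hperm
    have hlen : es.length = deg g := by rw [hperm.length_eq, edgeList_length]
    have hnd : (es.map Prod.fst).Nodup :=
      ((hperm.map Prod.fst).nodup_iff).mpr (edgeList_nodup_fst g)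
    have hne : ∀ e ∈ es, e.1 ≠ e.2 := by
      intro e he
      have := mem_edgeList.mp (hperm.mem_iff.mp he)
      intro h12
      exact this.1 (by rw [← this.2, ← h12])
    have hbuild : build es = g := by
      funext x
      by_cases hx : g x = x
      · have hxs : x ∉ es.map Prod.fst := by
          intro hmem
          obtain ⟨y, hy⟩ := mem_map_fst hmem
          have := mem_edgeList.mp (hperm.mem_iff.mp hy)
          exact this.1 hx
        rw [build_of_not_mem hxs, hx]
      · have : (x, g x) ∈ es := hperm.mem_iff.mpr (mem_edgeList.mpr ⟨hx, rfl⟩)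
        exact build_of_mem hnd this
    exact ⟨⟨hlen, hnd, hne, hbuild ▸ hg⟩, hbuild⟩

lemma card_fiber {g : Fin n → Fin n} (hg : Acyc g) :
    ((seqs n (deg g)).filter (fun es => build es = g)).card = Nat.factorial (deg g) := by
  classical
  rw [fiber_eq_permutations hg]
  have hnd : (edgeList g).Nodup := (edgeList_nodup_fst g).of_map _
  rw [List.toFinset_card_of_nodup (List.nodup_permutations _ hnd),
    List.length_permutations, edgeList_length]

noncomputable def acycD (n d : ℕ) : Finset (Fin n → Fin n) :=
  Set.Finite.toFinset (Set.toFinite {g : Fin n → Fin n | Acyc g ∧ deg g = d})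

lemma mem_acycD {d : ℕ} {g : Fin n → Fin n} : g ∈ acycD n d ↔ Acyc g ∧ deg g = d := by
  rw [acycD, Set.Finite.mem_toFinset]; rfl

lemma card_acycD_mul (hn : 1 ≤ n) (d : ℕ) :
    (acycD n d).card * Nat.factorial d = n ^ d * (n - 1).descFactorial d := by
  classical
  rw [← card_seqs hn d]
  have hmaps : ∀ es ∈ seqs n d, build es ∈ acycD n d := by
    intro es hes
    obtain ⟨hlen, hgood⟩ := mem_seqs.mp hes
    rw [mem_acycD]
    exact ⟨hgood.2.2, by rw [deg_build hgood, hlen]⟩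
  rw [Finset.card_eq_sum_card_fiberwise hmaps]
  have hfib : ∀ g ∈ acycD n d, ((seqs n d).filter (fun es => build es = g)).card
      = Nat.factorial d := by
    intro g hg
    obtain ⟨hac, hdeg⟩ := mem_acycD.mp hg
    have := card_fiber hac
    rw [hdeg] at this
    exact this
  rw [Finset.sum_congr rfl hfib, Finset.sum_const, smul_eq_mul]

lemma card_acycD (hn : 1 ≤ n) (d : ℕ) :
    (acycD n d).card = n ^ d * Nat.choose (n - 1) d := by
  rcases le_or_gt d (n - 1) with hd | hd
  · have h := card_acycD_mul hn d
    rw [Nat.descFactorial_eq_factorial_mul_choose] at h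
    refine Nat.eq_of_mul_eq_mul_right (Nat.factorial_pos d) ?_
    rw [h]; ring
  · -- d > n - 1 : both sides zero
    have h1 : (acycD n d).card = 0 := by
      rw [Finset.card_eq_zero]
      ext g
      simp only [mem_acycD, Finset.notMem_empty, iff_false]
      rintro ⟨hac, hdeg⟩
      have := hac.deg_lt hn
      omega
    rw [h1, Nat.choose_eq_zero_of_lt (by omega), Nat.mul_zero]

lemma card_acyc (hn : 1 ≤ n) :
    Nat.card {g : Fin n → Fin n | Acyc g} = (n + 1) ^ (n - 1) := by
  classical
  set A : Finset (Fin n → Fin n) :=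
    Set.Finite.toFinset (Set.toFinite {g : Fin n → Fin n | Acyc g}) with hA
  have hAmem : ∀ g, g ∈ A ↔ Acyc g := by
    intro g; rw [hA, Set.Finite.mem_toFinset]; rfl
  have hcard : Nat.card {g : Fin n → Fin n | Acyc g} = A.card := by
    rw [hA, Set.Finite.card_toFinset]
    exact Nat.card_eq_fintype_card
  rw [hcard]
  have hmaps : ∀ g ∈ A, deg g ∈ Finset.range n := by
    intro g hg
    rw [Finset.mem_range]
    exact ((hAmem g).mp hg).deg_lt hn
  rw [Finset.card_eq_sum_card_fiberwise hmaps]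
  have hfib : ∀ d ∈ Finset.range n, (A.filter (fun g => deg g = d)).card
      = n ^ d * Nat.choose (n - 1) d := by
    intro d _
    rw [← card_acycD hn d]
    congr 1
    ext g
    rw [mem_filter, hAmem, mem_acycD]
  rw [Finset.sum_congr rfl hfib]
  -- binomial theorem
  have hb := add_pow (R := ℕ) n 1 (n - 1)
  have hrange : n - 1 + 1 = n := by omega
  rw [hrange] at hb
  simp only [one_pow, mul_one] at hb
  rw [hb]
  apply Finset.sum_congr rfl
  intro d _
  simp

lemma conj_iterate (σ : Equiv.Perm (Fin n)) (h : Fin n → Fin n) (k : ℕ) :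
    (⇑σ ∘ h ∘ ⇑σ.symm)^[k] = ⇑σ ∘ h^[k] ∘ ⇑σ.symm := by
  induction k with
  | zero => funext x; simp
  | succ k ih =>
    rw [Function.iterate_succ', Function.iterate_succ', ih]
    funext x
    simp

lemma acyc_of_le {h : Fin n → Fin n} (hle : ∀ i, h i ≤ i) : Acyc h := by
  intro y k hk
  have mono : ∀ j, h^[j+1] y ≤ h y := by
    intro j
    induction j with
    | zero => exact le_refl _
    | succ j ih =>
      calc h^[j+2] y = h (h^[j+1] y) := Function.iterate_succ_apply' h _ y
        _ ≤ h^[j+1] y := hle _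
        _ ≤ h y := ih
  refine le_antisymm (hle y) ?_
  calc y = h^[k+1] y := hk.symm
    _ ≤ h y := mono k

lemma mem_iUnion_iff_acyc (hn : 1 ≤ n) (g : Fin n → Fin n) :
    g ∈ (⋃ σ : Equiv.Perm (Fin n), conjM n σ) ↔ Acyc g := by
  constructor
  · intro hg
    rw [Set.mem_iUnion] at hg
    obtain ⟨σ, h, hle, rfl⟩ := hg
    intro x k hk
    rw [conj_iterate] at hk
    have : h^[k+1] (σ.symm x) = σ.symm x := by
      have := congrArg σ.symm hk
      simpa using this
    have hfix : h (σ.symm x) = σ.symm x := acyc_of_le hle _ k this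
    simp [hfix]
  · intro hg
    classical
    have hex : ∀ x : Fin n, ∃ k, g (g^[k] x) = g^[k] x :=
      fun x => ⟨n, hg.root_fixed hn x⟩
    have hdec : ∀ x, g x ≠ x → Nat.find (hex (g x)) < Nat.find (hex x) := by
      intro x hx
      have h1 : 1 ≤ Nat.find (hex x) := by
        by_contra h0
        push_neg at h0
        have h0' : Nat.find (hex x) = 0 := by omega
        have hs := Nat.find_spec (hex x)
        rw [h0'] at hs
        simp only [Function.iterate_zero, id_eq] at hs
        exact hx hs
      have hspec : g (g^[Nat.find (hex x)] x) = g^[Nat.find (hex x)] x := Nat.find_spec (hex x)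
      have hgx : g (g^[Nat.find (hex x) - 1] (g x)) = g^[Nat.find (hex x) - 1] (g x) := by
        have he : g^[Nat.find (hex x) - 1] (g x) = g^[Nat.find (hex x)] x := by
          rw [← Function.iterate_succ_apply]
          congr 1
          omega
        rw [he]
        exact hspec
      calc Nat.find (hex (g x)) ≤ Nat.find (hex x) - 1 := Nat.find_le hgx
        _ < Nat.find (hex x) := by omega
    set σ : Equiv.Perm (Fin n) := Tuple.sort (fun x => Nat.find (hex x)) with hσ
    rw [Set.mem_iUnion]
    refine ⟨σ, ⇑σ.symm ∘ g ∘ ⇑σ, ?_, ?_⟩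
    · intro i
      simp only [Function.comp_apply]
      by_cases hfix : g (σ i) = σ i
      · rw [hfix]
        simp
      · by_contra hcon
        rw [not_le] at hcon
        have hm := Tuple.monotone_sort (fun x => Nat.find (hex x))
        have h1 := hm hcon.le
        rw [hσ] at h1
        simp only [Function.comp_apply, Equiv.apply_symm_apply] at h1
        exact absurd h1 (not_le.mpr (hdec _ hfix))
    · funext x
      simp

lemma bij_acyc_eq_id {f : Fin n → Fin n} (hf : Function.Bijective f) (ha : Acyc f) :
    f = id := by
  funext x
  have hni : ¬ Function.Injective (fun i : Fin (n+1) => f^[(i : ℕ)] x) := by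
    intro hinj
    have := Fintype.card_le_of_injective _ hinj
    simp at this
  rw [Function.not_injective_iff] at hni
  obtain ⟨i, j, hij, hne⟩ := hni
  wlog hlt : (i : ℕ) < (j : ℕ) generalizing i j
  · exact this j i hij.symm (Ne.symm hne) (by omega)
  have hi_inj : Function.Injective f^[(i : ℕ)] := (hf.injective).iterate _
  have : f^[(j : ℕ) - (i : ℕ)] x = x := by
    apply hi_inj
    rw [← Function.iterate_add_apply]
    have : (i : ℕ) + ((j : ℕ) - (i : ℕ)) = (j : ℕ) := by omega
    rw [this, ← hij]
  exact ha.iterate_fixed' (by omega) this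

end CayleyCount

/-- The counting identity from the proof of Proposition 3, part 1 (via Cayley's
formula): `|S_n ∪ ⋃_σ σ M_n σ⁻¹| = (n+1)^(n−1) + n! − 1`. -/
theorem cayley_union_count (n : ℕ) (hn : 1 ≤ n) :
    Nat.card
        (({f : Fin n → Fin n | Function.Bijective f} ∪
          ⋃ σ : Equiv.Perm (Fin n), conjM n σ : Set (Fin n → Fin n))) =
      (n + 1) ^ (n - 1) + Nat.factorial n - 1 := by
  classical
  have hU : (⋃ σ : Equiv.Perm (Fin n), conjM n σ) = {g : Fin n → Fin n | CayleyCount.Acyc g} :=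
    Set.ext fun g => CayleyCount.mem_iUnion_iff_acyc hn g
  rw [hU]
  set B : Set (Fin n → Fin n) := {f | Function.Bijective f} with hBdef
  set A : Set (Fin n → Fin n) := {g | CayleyCount.Acyc g} with hAdef
  have hinter : B ∩ A = {id} := by
    ext f
    simp only [hBdef, hAdef, Set.mem_inter_iff, Set.mem_singleton_iff, Set.mem_setOf_eq]
    constructor
    · rintro ⟨h1, h2⟩
      exact CayleyCount.bij_acyc_eq_id h1 h2
    · rintro rfl
      exact ⟨Function.bijective_id, CayleyCount.acyc_id⟩
  have hBA := Set.ncard_union_add_ncard_inter B A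
  rw [hinter, Set.ncard_singleton] at hBA
  have hB : B.ncard = Nat.factorial n := by
    rw [← Nat.card_coe_set_eq]
    have e : B ≃ Equiv.Perm (Fin n) :=
      { toFun := fun f => Equiv.ofBijective f.1 f.2
        invFun := fun σ => ⟨⇑σ, σ.bijective⟩
        left_inv := fun f => Subtype.ext rfl
        right_inv := fun σ => by ext x; rfl }
    rw [Nat.card_congr e, Nat.card_eq_fintype_card, Fintype.card_perm, Fintype.card_fin]
  have hA : A.ncard = (n + 1) ^ (n - 1) := by
    rw [← Nat.card_coe_set_eq]
    exact CayleyCount.card_acyc hn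
  rw [Nat.card_coe_set_eq]
  omega
end

section
/- For every integer n ≥ 2, the set {f : Z_n → Z_n | f is not bijective, or f is an even permutation} (that is, all functions except the odd permutations) is a proper submonoid of the monoid of all functions Z_n → Z_n under composition, and its cardinality is n^n − n!/2. In particular, the largest proper submonoid of this monoid has cardinality at least n^n − n!/2. -/
/-- All functions `Z_n → Z_n` except the odd permutations. -/
def noOddPerms (n : ℕ) : Set (Fin n → Fin n) :=
  {f : Fin n → Fin n | ¬Function.Bijective f ∨
    ∃ σ : Equiv.Perm (Fin n), ⇑σ = f ∧ Equiv.Perm.sign σ = 1}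

lemma compl_noOddPerms (n : ℕ) :
    (noOddPerms n)ᶜ = (fun σ : Equiv.Perm (Fin n) => ⇑σ) ''
      {σ : Equiv.Perm (Fin n) | Equiv.Perm.sign σ = -1} := by
  ext f
  simp only [Set.mem_compl_iff, noOddPerms, Set.mem_setOf_eq, Set.mem_image, not_or, not_not,
    not_exists]
  constructor
  · rintro ⟨hb, h⟩
    refine ⟨Equiv.ofBijective f hb, ?_, rfl⟩
    rcases Int.units_eq_one_or (Equiv.Perm.sign (Equiv.ofBijective f hb)) with h1 | h1
    · exact ((h (Equiv.ofBijective f hb)) ⟨rfl, h1⟩).elim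
    · exact h1
  · rintro ⟨σ, hσ, rfl⟩
    refine ⟨σ.bijective, fun τ hτh => ?_⟩
    obtain ⟨hτ, hτs⟩ := hτh
    have : τ = σ := Equiv.coe_fn_injective hτ
    subst this
    rw [hσ] at hτs
    exact absurd hτs (by decide)

/-- Proposition 3, part 3 (Submonoid sizes): the complement of the odd permutations
is a proper submonoid of the composition monoid `Z_n^{Z_n}` of cardinality
`n^n − n!/2`; in particular the largest proper submonoid has cardinality at least
`n^n − n!/2`. -/
theorem submonoid_sizes_part3 (n : ℕ) (hn : 2 ≤ n) :
    IsSubmonoidSet (noOddPerms n) ∧ noOddPerms n ≠ Set.univ ∧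
      Nat.card (noOddPerms n) = n ^ n - Nat.factorial n / 2 := by
  have hnt : Nontrivial (Fin n) := Fin.nontrivial_iff_two_le.mpr hn
  set a : Fin n := ⟨0, by omega⟩ with ha
  set b : Fin n := ⟨1, by omega⟩ with hb
  have h0 : a ≠ b := by simp [ha, hb, Fin.ext_iff]
  have hswap : ⇑(Equiv.swap a b) ∉ noOddPerms n := by
    rw [← Set.mem_compl_iff, compl_noOddPerms]
    exact ⟨Equiv.swap a b, by simp [Equiv.Perm.sign_swap h0], rfl⟩
  refine ⟨⟨Or.inr ⟨Equiv.refl _, rfl, by simp⟩, ?_⟩, ?_, ?_⟩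
  · rintro f hf g hg
    by_cases hb : Function.Bijective (f ∘ g)
    · have hgb : Function.Bijective g :=
        Finite.injective_iff_bijective.mp hb.injective.of_comp
      have hfb : Function.Bijective f :=
        Finite.surjective_iff_bijective.mp (hb.surjective.of_comp)
      rcases hf with hf | ⟨σ, hσ, hσs⟩
      · exact absurd hfb hf
      rcases hg with hg | ⟨τ, hτ, hτs⟩
      · exact absurd hgb hg
      exact Or.inr ⟨σ * τ, by ext x; simp [hσ, hτ], by simp [hσs, hτs]⟩
    · exact Or.inl hb
  · intro h
    exact hswap (h ▸ Set.mem_univ _)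
  · -- cardinality
    have hcompl : ((noOddPerms n)ᶜ).ncard = Nat.factorial n / 2 := by
      rw [compl_noOddPerms,
        Set.ncard_image_of_injective _ (Equiv.coe_fn_injective)]
      have hset : {σ : Equiv.Perm (Fin n) | Equiv.Perm.sign σ = -1} =
          ((alternatingGroup (Fin n) : Set (Equiv.Perm (Fin n))))ᶜ := by
        ext σ
        simp only [Set.mem_compl_iff, SetLike.mem_coe, Equiv.Perm.mem_alternatingGroup,
          Set.mem_setOf_eq]
        rcases Int.units_eq_one_or (Equiv.Perm.sign σ) with h | h <;> simp [h]
      rw [hset]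
      have h2 : 2 * Fintype.card (alternatingGroup (Fin n)) = Fintype.card (Equiv.Perm (Fin n)) :=
        two_mul_card_alternatingGroup
      have hperm : Fintype.card (Equiv.Perm (Fin n)) = Nat.factorial n := by
        simp [Fintype.card_perm]
      have htot := Set.ncard_add_ncard_compl
        ((alternatingGroup (Fin n) : Set (Equiv.Perm (Fin n))))
      rw [Nat.card_eq_fintype_card, hperm] at htot
      have halt : (alternatingGroup (Fin n) : Set (Equiv.Perm (Fin n))).ncard =
          Fintype.card (alternatingGroup (Fin n)) := by
        rw [← Nat.card_eq_fintype_card, ← Nat.card_coe_set_eq]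
        rfl
      omega
    have htotal := Set.ncard_add_ncard_compl (noOddPerms n)
    have hcard : Nat.card (Fin n → Fin n) = n ^ n := by simp
    rw [Nat.card_coe_set_eq]
    omega
end
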